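/- For all real numbers α₁, α₂ with 0 < α₁ < α₂ < 1/2, the following inequality holds: α₂/(1−α₁+α₂) < [h_b(α₂) − h_b(α₁) + α₂·h_b(α₁/α₂)] / [α₂·h_b(α₁/α₂) + (1−α₁)·h_b((α₂−α₁)/(1−α₁))]. -/

import Mathlib

/-- Binary entropy with logarithm base 2. -/
noncomputable def binEnt2 (p : ℝ) : ℝ := -(p * Real.logb 2 p) - (1 - p) * Real.logb 2 (1 - p)

/-- natural-log entropy -/
noncomputable def natEnt (p : ℝ) : ℝ := -(p * Real.log p) - (1 - p) * Real.log (1 - p)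

lemma binEnt2_eq (p : ℝ) : binEnt2 p = natEnt p / Real.log 2 := by
  unfold binEnt2 natEnt Real.logb; ring

lemma natEnt_pos {p : ℝ} (h0 : 0 < p) (h1 : p < 1) : 0 < natEnt p := by
  have l1 : Real.log p < 0 := Real.log_neg h0 h1
  have l2 : Real.log (1 - p) < 0 := Real.log_neg (by linarith) (by linarith)
  have hp : 0 < 1 - p := by linarith
  unfold natEnt
  nlinarith

lemma natEnt_deriv {p : ℝ} (h0 : 0 < p) (h1 : p < 1) :
    HasDerivAt natEnt (Real.log (1 - p) - Real.log p) p := by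
  have d1 : HasDerivAt (fun x : ℝ => x * Real.log x) (Real.log p + 1) p :=
    Real.hasDerivAt_mul_log (ne_of_gt h0)
  have d2 : HasDerivAt (fun x : ℝ => x * Real.log x) (Real.log (1 - p) + 1) (1 - p) :=
    Real.hasDerivAt_mul_log (by linarith)
  have d3 : HasDerivAt (fun x : ℝ => 1 - x) (-1) p := by
    simpa using (hasDerivAt_id p).const_sub 1
  have d4 : HasDerivAt (fun x : ℝ => (1 - x) * Real.log (1 - x))
      ((Real.log (1 - p) + 1) * (-1)) p := d2.comp p d3
  have d5 := (d1.neg).sub d4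
  have : HasDerivAt natEnt (-(Real.log p + 1) - (Real.log (1 - p) + 1) * (-1)) p := d5
  convert this using 1
  ring

lemma ratio_deriv {x : ℝ} (h0 : 0 < x) (h1 : x < 1) :
    HasDerivAt (fun p => natEnt p / p) (Real.log (1 - x) / x ^ 2) x := by
  have hd := (natEnt_deriv h0 h1).div (hasDerivAt_id x) (ne_of_gt h0)
  have heq : ((Real.log (1 - x) - Real.log x) * x - natEnt x * 1) / x ^ 2
      = Real.log (1 - x) / x ^ 2 := by
    unfold natEnt; field_simp; ring
  simp only [id_eq] at hd
  rw [heq] at hd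
  exact hd

lemma ratio_anti : StrictAntiOn (fun p => natEnt p / p) (Set.Ioo (0:ℝ) 1) := by
  apply strictAntiOn_of_deriv_neg (convex_Ioo 0 1)
  · intro x hx
    exact (ratio_deriv hx.1 hx.2).continuousAt.continuousWithinAt
  · intro x hx
    rw [interior_Ioo] at hx
    obtain ⟨hx1, hx2⟩ := hx
    rw [(ratio_deriv hx1 hx2).deriv]
    have : Real.log (1 - x) < 0 := Real.log_neg (by linarith) (by linarith)
    exact div_neg_of_neg_of_pos this (pow_pos hx1 2)

lemma natEnt_symm (p : ℝ) : natEnt (1 - p) = natEnt p := by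
  unfold natEnt
  rw [show (1:ℝ) - (1 - p) = p by ring]
  ring

lemma grouping {a b : ℝ} (h1 : 0 < a) (h12 : a < b) (h2 : b < 1) :
    natEnt b - natEnt a + b * natEnt (a / b) = (1 - b) * 0 + (1 - a) * natEnt ((b - a) / (1 - a)) := by
  have hb : (0:ℝ) < b := lt_trans h1 h12
  have hd : (0:ℝ) < b - a := by linarith
  have h1a : (0:ℝ) < 1 - a := by linarith
  have h1b : (0:ℝ) < 1 - b := by linarith
  unfold natEnt
  rw [show (1:ℝ) - a / b = (b - a) / b by field_simp,
      show (1:ℝ) - (b - a) / (1 - a) = (1 - b) / (1 - a) by field_simp; ring,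
      Real.log_div (ne_of_gt h1) (ne_of_gt hb),
      Real.log_div (ne_of_gt hd) (ne_of_gt hb),
      Real.log_div (ne_of_gt hd) (ne_of_gt h1a),
      Real.log_div (ne_of_gt h1b) (ne_of_gt h1a)]
  field_simp
  ring

/-- For `0 < α₁ < α₂ < 1/2`, the stationary probability `α₂/(1−α₁+α₂)` is strictly smaller
than the threshold of the decision rule. -/
theorem stationary_below_threshold (α₁ α₂ : ℝ)
    (h1 : 0 < α₁) (h12 : α₁ < α₂) (h2 : α₂ < 1 / 2) :
    α₂ / (1 - α₁ + α₂) <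
      (binEnt2 α₂ - binEnt2 α₁ + α₂ * binEnt2 (α₁ / α₂)) /
        (α₂ * binEnt2 (α₁ / α₂) + (1 - α₁) * binEnt2 ((α₂ - α₁) / (1 - α₁))) := by
  have hb : (0:ℝ) < α₂ := lt_trans h1 h12
  have hd : (0:ℝ) < α₂ - α₁ := by linarith
  have h1a : (0:ℝ) < 1 - α₁ := by linarith
  have hL : (0:ℝ) < Real.log 2 := Real.log_pos one_lt_two
  -- the two ratio points
  set p₁ : ℝ := (α₂ - α₁) / α₂ with hp₁
  set p₂ : ℝ := (α₂ - α₁) / (1 - α₁) with hp₂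
  have hp₁mem : p₁ ∈ Set.Ioo (0:ℝ) 1 := by
    constructor
    · positivity
    · rw [div_lt_one hb]; linarith
  have hp₂mem : p₂ ∈ Set.Ioo (0:ℝ) 1 := by
    constructor
    · positivity
    · rw [div_lt_one h1a]; linarith
  have hplt : p₂ < p₁ := by
    rw [hp₁, hp₂, div_lt_div_iff₀ h1a hb]
    nlinarith
  -- key : α₂ * natEnt p₁ < (1-α₁) * natEnt p₂
  have hratio : natEnt p₁ / p₁ < natEnt p₂ / p₂ := ratio_anti hp₂mem hp₁mem hplt
  have hkey0 : α₂ * natEnt p₁ < (1 - α₁) * natEnt p₂ := by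
    rw [div_lt_div_iff₀ (by exact hp₁mem.1) (by exact hp₂mem.1)] at hratio
    have h2' : natEnt p₁ * (α₂ - α₁) * α₂ < natEnt p₂ * (α₂ - α₁) * (1 - α₁) := by
      rw [← div_lt_div_iff₀ h1a hb, mul_div_assoc, mul_div_assoc]
      exact hratio
    nlinarith
  have hE₂pos : 0 < natEnt p₂ := natEnt_pos hp₂mem.1 hp₂mem.2
  have hE₁pos : 0 < natEnt p₁ := natEnt_pos hp₁mem.1 hp₁mem.2
  have hkey : α₂ ^ 2 * natEnt p₁ < (1 - α₁) ^ 2 * natEnt p₂ := by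
    have hab : α₂ < 1 - α₁ := by linarith
    nlinarith [mul_lt_mul_of_pos_left hkey0 hb,
      mul_nonneg (mul_nonneg hE₂pos.le h1a.le) (by linarith : (0:ℝ) ≤ 1 - α₁ - α₂)]
  -- rewrite binEnt2 (α₁/α₂) as binEnt2 p₁
  have hsym : binEnt2 (α₁ / α₂) = natEnt p₁ / Real.log 2 := by
    rw [binEnt2_eq, ← natEnt_symm (α₁ / α₂), show (1:ℝ) - α₁ / α₂ = p₁ by rw [hp₁]; field_simp]
  have hgroup := grouping h1 h12 (by linarith : α₂ < 1)
  -- numerator equals (1-α₁) * natEnt p₂ / log 2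
  have hnum : binEnt2 α₂ - binEnt2 α₁ + α₂ * binEnt2 (α₁ / α₂)
      = ((1 - α₁) * natEnt p₂) / Real.log 2 := by
    rw [binEnt2_eq, binEnt2_eq, binEnt2_eq]
    field_simp
    linarith [hgroup]
  rw [hnum, hsym, binEnt2_eq]
  have hDpos : 0 < α₂ * (natEnt p₁ / Real.log 2) + (1 - α₁) * (natEnt p₂ / Real.log 2) := by
    positivity
  rw [div_lt_div_iff₀ (by linarith) hDpos]
  have hfin : α₂ * (α₂ * natEnt p₁ + (1 - α₁) * natEnt p₂)
      < (1 - α₁) * natEnt p₂ * (1 - α₁ + α₂) := by nlinarith [hkey]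
  calc α₂ * (α₂ * (natEnt p₁ / Real.log 2) + (1 - α₁) * (natEnt p₂ / Real.log 2))
      = α₂ * (α₂ * natEnt p₁ + (1 - α₁) * natEnt p₂) / Real.log 2 := by ring
    _ < (1 - α₁) * natEnt p₂ * (1 - α₁ + α₂) / Real.log 2 :=
        (div_lt_div_iff₀ hL hL).mpr (mul_lt_mul_of_pos_right hfin hL)
    _ = (1 - α₁) * natEnt p₂ / Real.log 2 * (1 - α₁ + α₂) := by ring
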